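/- Let X be a regular projective curve over a field k and D an ℝ-divisor on X with deg(D) > 0. Then sup_{s ∈ Γ(D)_ℚ^×} (s^{-1}) = D, i.e. for every closed point x, sup over s of ord_x(s^{-1}) equals ord_x(D). -/

import Mathlib

open scoped BigOperators Classical

/-- An abstract package of the data attached to a regular projective curve `X` over a field
`k`: `F = Rat(X)` is the function field, `P = X^{(1)}` is the set of closed points,
`degp x = [k(x):k]`, `ord x f` is the order of vanishing of a nonzero rational function `f`
at `x`, `H0 D` is the Riemann–Roch space of an ℝ-divisor `D : P → ℝ` (a `k`-subspace of
`F`), and `riemannRoch` is the Riemann–Roch estimate for integral divisors of large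
degree. -/
structure CurveData (k F P : Type*) [Field k] [Field F] [Algebra k F] : Type _ where
  genus : ℕ
  degp : P → ℕ
  degp_pos : ∀ x, 0 < degp x
  ord : P → F → ℤ
  ord_mul : ∀ (x : P) {f g : F}, f ≠ 0 → g ≠ 0 → ord x (f * g) = ord x f + ord x g
  ord_support_finite : ∀ {f : F}, f ≠ 0 → (Function.support fun x => ord x f).Finite
  ord_deg_zero : ∀ {f : F}, f ≠ 0 → (∑ᶠ x, (ord x f : ℝ) * (degp x : ℝ)) = 0
  finitely_generated : ∃ S : Finset F, IntermediateField.adjoin k (S : Set F) = ⊤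
  H0 : (P → ℝ) → Submodule k F
  mem_H0 : ∀ (D : P → ℝ) (f : F), f ∈ H0 D ↔ (f ≠ 0 → ∀ x, 0 ≤ (ord x f : ℝ) + D x)
  H0_finite : ∀ D, Module.Finite k (H0 D)
  riemannRoch : ∀ D : P → ℝ, (Function.support D).Finite →
    (∀ x, ∃ n : ℤ, (n : ℝ) = D x) →
    2 * (genus : ℝ) - 2 < ∑ᶠ x, D x * (degp x : ℝ) →
    (Module.finrank k ↥(H0 D) : ℝ) = (∑ᶠ x, D x * (degp x : ℝ)) + 1 - genus

variable {k F P : Type*} [Field k] [Field F] [Algebra k F]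

/-- The degree of an ℝ-divisor `D`: `deg D = Σ_x D(x)·[k(x):k]`. -/
noncomputable def CurveData.degD (C : CurveData k F P) (D : P → ℝ) : ℝ :=
  ∑ᶠ x, D x * (C.degp x : ℝ)

/-- `E` is a principal ℝ-divisor, i.e. lies in the ℝ-linear span of the divisors of nonzero
rational functions (the image of `Rat(X)^×_ℝ → nDiv_ℝ(X)`). -/
def CurveData.IsPrincipalR (C : CurveData k F P) (E : P → ℝ) : Prop :=
  E ∈ Submodule.span ℝ {E' : P → ℝ | ∃ f : F, f ≠ 0 ∧ E' = fun x => (C.ord x f : ℝ)}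

/-- Let `D` be an ℝ-divisor with `deg D > 0` on a regular projective
curve `X` over `k`. Then `sup_{s ∈ Γ(D)_ℚ^×} (s⁻¹) = D`: for every closed point `x`, the
supremum over `s = f^{1/n} ∈ Γ(D)_ℚ^×` of `ord_x(s⁻¹) = −ord_x(f)/n` equals `ord_x(D)`. -/
theorem sSup_ord_inv_gammaQ_eq
    (C : CurveData k F P) (D : P → ℝ) (hD : (Function.support D).Finite)
    (hdeg : 0 < C.degD D) (x : P) :
    sSup {r : ℝ | ∃ (n : ℕ) (f : F), 0 < n ∧ f ≠ 0 ∧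
        (∀ y, 0 ≤ (C.ord y f : ℝ) + (n : ℝ) * D y) ∧ r = -(C.ord x f : ℝ) / (n : ℝ)}
      = D x := by
  classical
  set S : Set ℝ := {r : ℝ | ∃ (n : ℕ) (f : F), 0 < n ∧ f ≠ 0 ∧
      (∀ y, 0 ≤ (C.ord y f : ℝ) + (n : ℝ) * D y) ∧ r = -(C.ord x f : ℝ) / (n : ℝ)}
    with hSdef
  -- the finite set containing all relevant points
  set T : Finset P := hD.toFinset ∪ {x} with hT
  have hxT : x ∈ T := Finset.mem_union_right _ (Finset.mem_singleton_self x)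
  have hDT : Function.support D ⊆ (T : Set P) := fun y hy => by
    simp [hT, Set.Finite.mem_toFinset, hy]
  set c : ℝ := ∑ y ∈ T, (C.degp y : ℝ) with hc
  have hdegDT : C.degD D = ∑ y ∈ T, D y * (C.degp y : ℝ) := by
    refine finsum_eq_sum_of_support_subset _ ?_
    intro y hy
    apply hDT
    intro h0
    simp [Function.mem_support, h0] at hy
  -- Key construction via Riemann–Roch
  have key : ∀ n : ℕ, 0 < n → 2 * (C.genus : ℝ) - 2 < (n : ℝ) * C.degD D - 2 * c →
      ∃ f : F, f ≠ 0 ∧ (∀ y, 0 ≤ (C.ord y f : ℝ) + (n : ℝ) * D y) ∧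
        (n : ℝ) * D x - 1 < -(C.ord x f : ℝ) := by
    intro n hn hbig
    set E : P → ℝ := fun y => (⌊(n : ℝ) * D y⌋ : ℝ) with hE
    set E' : P → ℝ := fun y => (⌊(n : ℝ) * D y⌋ : ℝ) - (if y = x then 1 else 0) with hE'
    have hEout : ∀ y ∉ T, E y = 0 := by
      intro y hy
      have hDy : D y = 0 := by
        by_contra h0
        exact hy (hDT h0)
      simp [hE, hDy]
    have hE'out : ∀ y ∉ T, E' y = 0 := by
      intro y hy
      have hyx : y ≠ x := by
        intro h; exact hy (h ▸ hxT)
      have hDy : D y = 0 := by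
        by_contra h0
        exact hy (hDT h0)
      simp [hE', hDy, hyx]
    have hsuppE : Function.support E ⊆ (T : Set P) := fun y hy => by
      by_contra h; exact hy (hEout y h)
    have hsuppE' : Function.support E' ⊆ (T : Set P) := fun y hy => by
      by_contra h; exact hy (hE'out y h)
    have hdegE : (∑ᶠ y, E y * (C.degp y : ℝ)) = ∑ y ∈ T, E y * (C.degp y : ℝ) := by
      refine finsum_eq_sum_of_support_subset _ ?_
      intro y hy
      by_contra h
      simp [hEout y h] at hy
    have hdegE' : (∑ᶠ y, E' y * (C.degp y : ℝ)) = ∑ y ∈ T, E' y * (C.degp y : ℝ) := by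
      refine finsum_eq_sum_of_support_subset _ ?_
      intro y hy
      by_contra h
      simp [hE'out y h] at hy
    -- lower bound on deg E'
    have hE'lb : (n : ℝ) * C.degD D - 2 * c ≤ ∑ y ∈ T, E' y * (C.degp y : ℝ) := by
      have : ∀ y ∈ T, ((n : ℝ) * D y - 2) * (C.degp y : ℝ) ≤ E' y * (C.degp y : ℝ) := by
        intro y _
        have h1 : (n : ℝ) * D y - 2 ≤ E' y := by
          have hf := Int.sub_one_lt_floor ((n : ℝ) * D y)
          have : (if y = x then (1:ℝ) else 0) ≤ 1 := by split <;> norm_num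
          simp only [hE']
          nlinarith [Int.sub_one_lt_floor ((n : ℝ) * D y)]
        exact mul_le_mul_of_nonneg_right h1 (by positivity)
      calc (n : ℝ) * C.degD D - 2 * c
          = ∑ y ∈ T, ((n : ℝ) * D y - 2) * (C.degp y : ℝ) := by
            simp only [hdegDT, hc, Finset.mul_sum, ← Finset.sum_sub_distrib]
            exact Finset.sum_congr rfl fun y _ => by ring
        _ ≤ _ := Finset.sum_le_sum this
    -- deg E = deg E' + degp x
    have hdegdiff : ∑ y ∈ T, E y * (C.degp y : ℝ)
        = (∑ y ∈ T, E' y * (C.degp y : ℝ)) + (C.degp x : ℝ) := by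
      have : ∑ y ∈ T, (E y * (C.degp y : ℝ) - E' y * (C.degp y : ℝ))
          = ∑ y ∈ T, (if y = x then (C.degp y : ℝ) else 0) := by
        refine Finset.sum_congr rfl fun y _ => ?_
        simp only [hE, hE']
        split <;> ring
      rw [Finset.sum_sub_distrib] at this
      rw [Finset.sum_ite_eq' T x (fun y => (C.degp y : ℝ))] at this
      simp [hxT] at this
      linarith
    -- Riemann–Roch for E and E'
    have hRR : (Module.finrank k ↥(C.H0 E) : ℝ)
        = (∑ y ∈ T, E y * (C.degp y : ℝ)) + 1 - C.genus := by
      rw [← hdegE]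
      refine C.riemannRoch E (Set.Finite.subset T.finite_toSet hsuppE)
        (fun y => ⟨⌊(n : ℝ) * D y⌋, rfl⟩) ?_
      rw [hdegE, hdegdiff]
      have : (0:ℝ) ≤ (C.degp x : ℝ) := by positivity
      linarith
    have hRR' : (Module.finrank k ↥(C.H0 E') : ℝ)
        = (∑ y ∈ T, E' y * (C.degp y : ℝ)) + 1 - C.genus := by
      rw [← hdegE']
      refine C.riemannRoch E' (Set.Finite.subset T.finite_toSet hsuppE')
        (fun y => ⟨⌊(n : ℝ) * D y⌋ - (if y = x then 1 else 0), by
          simp only [hE']; split <;> push_cast <;> ring⟩) ?_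
      rw [hdegE']
      linarith
    -- finrank comparison
    have hfr : Module.finrank k ↥(C.H0 E') < Module.finrank k ↥(C.H0 E) := by
      have h1 : (Module.finrank k ↥(C.H0 E') : ℝ) < (Module.finrank k ↥(C.H0 E) : ℝ) := by
        rw [hRR, hRR', hdegdiff]
        have : (0:ℝ) < (C.degp x : ℝ) := by exact_mod_cast C.degp_pos x
        linarith
      exact_mod_cast h1
    -- exists f in H0 E not in H0 E'
    have hle : ¬ (C.H0 E ≤ C.H0 E') := by
      intro hle
      haveI := C.H0_finite E'
      exact absurd (Submodule.finrank_mono hle) (not_le.mpr hfr)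
    obtain ⟨f, hfE, hfE'⟩ := SetLike.not_le_iff_exists.mp hle
    clear hle
    have hfne : f ≠ 0 := by
      intro h
      exact hfE' (h ▸ (C.H0 E').zero_mem)
    have hfEord : ∀ y, 0 ≤ (C.ord y f : ℝ) + E y := (C.mem_H0 E f).mp hfE hfne
    refine ⟨f, hfne, ?_, ?_⟩
    · intro y
      have h1 := hfEord y
      have h2 : E y ≤ (n : ℝ) * D y := Int.floor_le _
      linarith
    · -- from f ∉ H0 E' : there is y with ord y f + E' y < 0; must be y = x
      have : ∃ y, (C.ord y f : ℝ) + E' y < 0 := by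
        by_contra h
        push_neg at h
        exact hfE' ((C.mem_H0 E' f).mpr fun _ y => h y)
      obtain ⟨y, hy⟩ := this
      have hyx : y = x := by
        by_contra hne
        have : E' y = E y := by simp [hE', hE, hne]
        rw [this] at hy
        exact absurd (hfEord y) (not_le.mpr hy)
      rw [hyx] at hy
      norm_num [hE'] at hy
      have hfloor : (n : ℝ) * D x - 1 < (⌊(n : ℝ) * D x⌋ : ℝ) := Int.sub_one_lt_floor _
      have hx0 := hfEord x
      simp only [hE] at hx0
      -- hy : ord x f + (⌊nDx⌋ - 1) < 0 ; hx0 : 0 ≤ ord x f + ⌊nDx⌋ ⇒ ord x f = -⌊nDx⌋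
      have hz1 : C.ord x f + ⌊(n : ℝ) * D x⌋ < 1 := by
        have : ((C.ord x f + ⌊(n : ℝ) * D x⌋ : ℤ) : ℝ) < 1 := by push_cast; linarith
        exact_mod_cast this
      have hz2 : 0 ≤ C.ord x f + ⌊(n : ℝ) * D x⌋ := by
        have : (0 : ℝ) ≤ ((C.ord x f + ⌊(n : ℝ) * D x⌋ : ℤ) : ℝ) := by push_cast; linarith
        exact_mod_cast this
      have hz : C.ord x f = -⌊(n : ℝ) * D x⌋ := by omega
      have hzr : -(C.ord x f : ℝ) = (⌊(n : ℝ) * D x⌋ : ℝ) := by rw [hz]; push_cast; ring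
      linarith
  -- good n exists for any bound
  have exists_n : ∀ b : ℝ, ∃ n : ℕ, 0 < n ∧ (b : ℝ) < n ∧
      2 * (C.genus : ℝ) - 2 < (n : ℝ) * C.degD D - 2 * c := by
    intro b
    obtain ⟨n, hn⟩ := exists_nat_gt (max (max b 0) ((2 * (C.genus : ℝ) - 2 + 2 * c) / C.degD D))
    refine ⟨n, ?_, ?_, ?_⟩
    · have : (0:ℝ) < n := lt_of_le_of_lt (le_max_of_le_left (le_max_right _ _)) hn
      exact_mod_cast this
    · exact lt_of_le_of_lt (le_max_of_le_left (le_max_left _ _)) hn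
    · have h2 : (2 * (C.genus : ℝ) - 2 + 2 * c) / C.degD D < n :=
        lt_of_le_of_lt (le_max_right _ _) hn
      have := (div_lt_iff₀ hdeg).mp h2
      linarith
  -- upper bound
  have hub : ∀ r ∈ S, r ≤ D x := by
    rintro r ⟨n, f, hn, hf, hcond, rfl⟩
    have hnpos : (0:ℝ) < n := by exact_mod_cast hn
    rw [div_le_iff₀ hnpos]
    have := hcond x
    linarith
  have hbdd : BddAbove S := ⟨D x, hub⟩
  -- nonempty
  have hne : S.Nonempty := by
    obtain ⟨n, hn, _, hbig⟩ := exists_n 0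
    obtain ⟨f, hf, hcond, _⟩ := key n hn hbig
    exact ⟨-(C.ord x f : ℝ) / (n : ℝ), n, f, hn, hf, hcond, rfl⟩
  refine le_antisymm (csSup_le hne hub) ?_
  refine le_of_forall_pos_lt_add fun ε hε => ?_
  obtain ⟨n, hn, hnε, hbig⟩ := exists_n (1 / ε)
  obtain ⟨f, hf, hcond, hlt⟩ := key n hn hbig
  have hnpos : (0:ℝ) < n := by exact_mod_cast hn
  have hrS : -(C.ord x f : ℝ) / (n : ℝ) ∈ S := ⟨n, f, hn, hf, hcond, rfl⟩
  have heq : D x - 1 / (n : ℝ) = ((n : ℝ) * D x - 1) / (n : ℝ) := by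
    rw [eq_div_iff (ne_of_gt hnpos)]
    field_simp
  have h1 : D x - 1 / (n : ℝ) < -(C.ord x f : ℝ) / (n : ℝ) := by
    rw [heq, div_lt_div_iff₀ hnpos hnpos]
    exact mul_lt_mul_of_pos_right hlt hnpos
  have h2 : 1 / (n : ℝ) < ε := by
    rw [div_lt_iff₀ hnpos]
    rw [div_lt_iff₀ hε] at hnε
    linarith [mul_comm ε (n:ℝ), mul_comm (n:ℝ) ε]
  calc D x < -(C.ord x f : ℝ) / (n : ℝ) + ε := by linarith
    _ ≤ sSup S + ε := by linarith [le_csSup hbdd hrS]
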